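/- arXiv:1212.6925 — 5 statements merged into one kernel-verified Lean document; each statement's English description precedes it below -/
import Mathlib

section
/- Let X be a random variable on [n] with Shannon entropy H(X) ≥ log₂ n − δ, and let S ⊆ [n]. Set Δ = sqrt(4δn/|S|). If Δ ≤ 1/10, then Pr[X ∈ S] ≥ (|S|/n)·(1 − Δ). -/
/-- Tangent line inequality for `x log x` at `c`. -/
lemma tangent_xlogx (p c : ℝ) (hp : 0 ≤ p) (hc : 0 < c) :
    p * Real.log c + p - c ≤ p * Real.log p := by
  rcases eq_or_lt_of_le hp with h | h
  · simp [← h]; positivity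
  · have h1 : Real.log (c / p) ≤ c / p - 1 :=
      Real.log_le_sub_one_of_pos (by positivity)
    rw [Real.log_div (ne_of_gt hc) (ne_of_gt h)] at h1
    have := mul_le_mul_of_nonneg_left h1 (le_of_lt h)
    have hp' : p ≠ 0 := ne_of_gt h
    field_simp at this
    nlinarith

/-- `log y ≤ (y - 1/y)/2` for `y ≥ 1`. -/
lemma log_le_half_sub (y : ℝ) (hy : 1 ≤ y) : Real.log y ≤ (y - 1/y) / 2 := by
  set f : ℝ → ℝ := fun t => (t - 1/t) / 2 - Real.log t with hf
  have hderiv : ∀ t : ℝ, 0 < t →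
      HasDerivAt f ((1 + 1/t^2)/2 - 1/t) t := by
    intro t ht
    have h1 : HasDerivAt (fun y : ℝ => y⁻¹) (-(t^2)⁻¹) t := hasDerivAt_inv (ne_of_gt ht)
    have h2 : HasDerivAt (fun y : ℝ => y) 1 t := hasDerivAt_id t
    have h3 : HasDerivAt (fun y : ℝ => (y - 1/y)/2) ((1 - -(t^2)⁻¹)/2) t := by
      simpa [one_div] using (h2.sub h1).div_const 2
    have h4 : HasDerivAt Real.log t⁻¹ t := Real.hasDerivAt_log (ne_of_gt ht)
    have := h3.sub h4
    have e : ((1 + 1/t^2)/2 - 1/t) = ((1 - -(t^2)⁻¹)/2 - t⁻¹) := by ring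
    rw [e]; exact this
  have hmono : MonotoneOn f (Set.Ici (1:ℝ)) := by
    apply monotoneOn_of_deriv_nonneg (convex_Ici 1)
    · intro x hx
      have hx0 : (0:ℝ) < x := lt_of_lt_of_le one_pos hx
      exact (hderiv x hx0).continuousAt.continuousWithinAt
    · intro x hx
      rw [interior_Ici] at hx
      have hx0 : (0:ℝ) < x := lt_trans one_pos hx
      exact (hderiv x hx0).differentiableAt.differentiableWithinAt
    · intro x hx
      rw [interior_Ici] at hx
      have hx0 : (0:ℝ) < x := lt_trans one_pos hx
      rw [(hderiv x hx0).deriv]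
      have : (1 + 1/x^2)/2 - 1/x = (x-1)^2 / (2*x^2) := by field_simp; ring
      rw [this]; positivity
  have h0 : f 1 ≤ f y := hmono (by simp) hy hy
  simp only [hf, Real.log_one, one_div] at h0 ⊢
  norm_num at h0
  linarith

/-- `x - 1 + (x-1)^2/2 ≤ x log x` for `0 < x ≤ 1`. -/
lemma xlogx_lower (x : ℝ) (hx : 0 < x) (hx1 : x ≤ 1) :
    x - 1 + (x-1)^2/2 ≤ x * Real.log x := by
  have hy : 1 ≤ 1/x := (le_div_iff₀ hx).mpr (by linarith)
  have := log_le_half_sub (1/x) hy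
  rw [Real.log_div one_ne_zero (ne_of_gt hx), Real.log_one] at this
  -- this : 0 - log x ≤ (1/x - 1/(1/x))/2
  have hxne : x ≠ 0 := ne_of_gt hx
  have h2 : (x^2 - 1)/(2*x) ≤ Real.log x := by
    have h3 : 1/(1/x) = x := by field_simp
    rw [h3] at this
    have : -Real.log x ≤ (1/x - x)/2 := by linarith
    have h4 : (x^2-1)/(2*x) = -((1/x - x)/2) := by field_simp; ring
    linarith [h4 ▸ neg_le_neg this]
  have := mul_le_mul_of_nonneg_left h2 (le_of_lt hx)
  have h5 : x * ((x^2-1)/(2*x)) = x - 1 + (x-1)^2/2 := by field_simp; ring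
  linarith [h5 ▸ this]

/-- If `X` is a random variable on `[n]` (with mass function `p`) with
entropy `H(X) ≥ log₂ n - δ`, `S ⊆ [n]`, and `Δ = sqrt(4δn/|S|) ≤ 1/10`, then
`Pr[X ∈ S] ≥ (|S|/n)(1 - Δ)`. -/
theorem stmt0 (n : ℕ) (hn : 0 < n) (p : Fin n → ℝ)
    (hp0 : ∀ i, 0 ≤ p i) (hp1 : ∑ i, p i = 1)
    (δ : ℝ) (hδ : 0 ≤ δ)
    (hH : (∑ i, Real.negMulLog (p i)) / Real.log 2 ≥ Real.logb 2 n - δ)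
    (S : Finset (Fin n)) (hS : S.Nonempty)
    (Δ : ℝ) (hΔ : Δ = Real.sqrt (4 * δ * n / S.card))
    (hΔ10 : Δ ≤ 1 / 10) :
    ∑ i ∈ S, p i ≥ ((S.card : ℝ) / n) * (1 - Δ) := by
  by_contra hcon
  push_neg at hcon
  set s : ℝ := (S.card : ℝ) with hs
  set q : ℝ := ∑ i ∈ S, p i with hq
  clear_value s q
  have hn0 : (0:ℝ) < n := Nat.cast_pos.mpr hn
  have hs0 : (0:ℝ) < s := by
    rw [hs]; exact_mod_cast Finset.card_pos.mpr hS
  have hsn : s ≤ n := by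
    rw [hs]
    exact_mod_cast (Finset.card_le_card (Finset.subset_univ S)).trans_eq (by simp)
  set r : ℝ := s / n with hr
  clear_value r
  have hr0 : 0 < r := by rw [hr]; positivity
  have hr1 : r ≤ 1 := by rw [hr]; exact div_le_one_of_le₀ hsn (le_of_lt hn0)
  have hΔ0 : 0 ≤ Δ := hΔ ▸ Real.sqrt_nonneg _
  have hΔsq : Δ^2 = 4 * δ / r := by
    rw [hΔ, Real.sq_sqrt (by positivity)]
    rw [hr]; field_simp
  have hq0 : 0 ≤ q := hq ▸ Finset.sum_nonneg (fun i _ => hp0 i)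
  have hqlt : q < r * (1 - Δ) := hcon
  have hqr : q < r := lt_of_lt_of_le hqlt (by nlinarith)
  -- entropy bound in nats
  have hlog2 : (0:ℝ) < Real.log 2 := Real.log_pos (by norm_num)
  have key1 : Real.log n - ∑ i, Real.negMulLog (p i) ≤ δ * Real.log 2 := by
    have h := mul_le_mul_of_nonneg_right hH (le_of_lt hlog2)
    rw [div_mul_cancel₀ _ (ne_of_gt hlog2)] at h
    rw [Real.logb, sub_mul, div_mul_cancel₀ _ (ne_of_gt hlog2)] at h
    linarith
  -- rewrite as relative entropy sum
  have identity : Real.log n - ∑ i, Real.negMulLog (p i)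
      = ∑ i, (p i * Real.log (p i) + p i * Real.log n) := by
    rw [Finset.sum_add_distrib, ← Finset.sum_mul, hp1, one_mul]
    simp [Real.negMulLog, Finset.sum_neg_distrib]
    ring
  -- per-term lower bound (used on complement)
  have term_ge : ∀ i : Fin n, p i - 1/n ≤ p i * Real.log (p i) + p i * Real.log n := by
    intro i
    have := tangent_xlogx (p i) (1/n) (hp0 i) (by positivity)
    rw [Real.log_div one_ne_zero (ne_of_gt hn0), Real.log_one] at this
    linarith
  have hsplit : ∑ i, (p i * Real.log (p i) + p i * Real.log n)
      = ∑ i ∈ S, (p i * Real.log (p i) + p i * Real.log n)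
        + ∑ i ∈ Sᶜ, (p i * Real.log (p i) + p i * Real.log n) :=
    (Finset.sum_add_sum_compl S _).symm
  have hqc : ∑ i ∈ Sᶜ, p i = 1 - q := by
    have := Finset.sum_add_sum_compl S p
    rw [hp1] at this; linarith [this]
  have hcardc : ((Sᶜ.card : ℕ) : ℝ) = n - s := by
    rw [Finset.card_compl]
    have hle : S.card ≤ Fintype.card (Fin n) := Finset.card_le_univ S
    rw [Nat.cast_sub hle]
    simp [hs]
  have boundC : r - q ≤ ∑ i ∈ Sᶜ, (p i * Real.log (p i) + p i * Real.log n) := by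
    have h1 : ∑ i ∈ Sᶜ, (p i - 1/n) ≤ _ := Finset.sum_le_sum (fun i _ => term_ge i)
    have h2 : ∑ i ∈ Sᶜ, (p i - 1/n) = (1 - q) - (n - s)/n := by
      rw [Finset.sum_sub_distrib, hqc, Finset.sum_const, nsmul_eq_mul, hcardc]; ring
    rw [h2] at h1
    have : (1 - q) - ((n:ℝ) - s)/n = r - q := by rw [hr]; field_simp; ring
    linarith [this ▸ h1]
  -- main bound : δ log 2 ≥ (q-r)^2/(2r)
  have main : (q - r)^2 / (2*r) ≤ δ * Real.log 2 := by
    rcases eq_or_lt_of_le hq0 with hq0' | hq0'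
    · -- q = 0 case
      have hSzero : ∑ i ∈ S, (p i * Real.log (p i) + p i * Real.log n) = 0 := by
        have hall : ∀ i ∈ S, p i = 0 := by
          intro i hi
          have hz : ∑ i ∈ S, p i = 0 := by rw [← hq]; exact hq0'.symm
          exact (Finset.sum_eq_zero_iff_of_nonneg (fun j _ => hp0 j)).mp hz i hi
        apply Finset.sum_eq_zero
        intro i hi; rw [hall i hi]; simp
      have hq' : q = 0 := hq0'.symm
      have hrle : r ≤ δ * Real.log 2 := by
        rw [identity, hsplit, hSzero, zero_add] at key1
        linarith
      have heq : (q - r)^2/(2*r) = r/2 := by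
        rw [hq']; field_simp; ring
      rw [heq]; linarith
    · -- q > 0 case
      have boundS : q * (Real.log q - Real.log r)
          ≤ ∑ i ∈ S, (p i * Real.log (p i) + p i * Real.log n) := by
        have hc : (0:ℝ) < q / s := by positivity
        have h1 : ∀ i ∈ S, p i * Real.log (q/s) + p i - q/s + p i * Real.log n
            ≤ p i * Real.log (p i) + p i * Real.log n := by
          intro i _
          linarith [tangent_xlogx (p i) (q/s) (hp0 i) hc]
        have h2 := Finset.sum_le_sum h1
        have h3 : ∑ i ∈ S, (p i * Real.log (q/s) + p i - q/s + p i * Real.log n)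
            = q * Real.log (q/s) + q - s * (q/s) + q * Real.log n := by
          rw [Finset.sum_add_distrib, Finset.sum_sub_distrib, Finset.sum_add_distrib,
            ← Finset.sum_mul, ← Finset.sum_mul, ← hq, Finset.sum_const, nsmul_eq_mul, ← hs]
        rw [h3] at h2
        have h4 : s * (q/s) = q := by field_simp
        have h5 : Real.log (q/s) = Real.log q - Real.log s :=
          Real.log_div (ne_of_gt hq0') (ne_of_gt hs0)
        have h6 : Real.log r = Real.log s - Real.log n := by
          rw [hr]; exact Real.log_div (ne_of_gt hs0) (ne_of_gt hn0)
        rw [h4, h5] at h2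
        have : q * (Real.log q - Real.log r)
            = q * (Real.log q - Real.log s) + q - q + q * Real.log n := by
          rw [h6]; ring
        linarith [this ▸ h2]
      -- combine
      have hcomb : q * (Real.log q - Real.log r) + (r - q) ≤ δ * Real.log 2 := by
        rw [identity, hsplit] at key1
        linarith
      -- x = q/r
      have hx0 : 0 < q / r := by positivity
      have hx1 : q / r ≤ 1 := by
        rw [div_le_one hr0]; linarith
      have hxl := xlogx_lower (q/r) hx0 hx1
      have hlog : Real.log (q/r) = Real.log q - Real.log r :=
        Real.log_div (ne_of_gt hq0') (ne_of_gt hr0)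
      have h7 : q - r + (q - r)^2/(2*r) ≤ q * (Real.log q - Real.log r) := by
        have := mul_le_mul_of_nonneg_left hxl (le_of_lt hr0)
        rw [hlog] at this
        have e1 : r * (q/r * (Real.log q - Real.log r)) = q * (Real.log q - Real.log r) := by
          field_simp
        have e2 : r * (q/r - 1 + (q/r - 1)^2/2) = q - r + (q-r)^2/(2*r) := by
          field_simp
        linarith [e1 ▸ e2 ▸ this]
      linarith
  -- final contradiction
  have hgap : r * Δ < r - q := by
    have e : r * (1 - Δ) = r - r * Δ := by ring
    linarith [e ▸ hqlt]
  have hsq : (r * Δ)^2 < (q - r)^2 := by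
    have h := mul_self_lt_mul_self (mul_nonneg hr0.le hΔ0) hgap
    have e : (q - r)^2 = (r - q) * (r - q) := by ring
    have e2 : (r * Δ)^2 = (r * Δ) * (r * Δ) := by ring
    rw [e, e2]; exact h
  have hfin : 2 * δ < (q - r)^2 / (2*r) := by
    rw [lt_div_iff₀ (by positivity)]
    have e3 : (r*Δ)^2 = 4*δ*r := by
      have e4 : (r*Δ)^2 = r^2 * Δ^2 := by ring
      rw [e4, hΔsq]; field_simp
    linarith [e3 ▸ hsq]
  have hlog2lt : Real.log 2 < 1 := by
    have := Real.log_two_lt_d9; linarith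
  have hfin2 : δ * Real.log 2 ≤ δ * 1 := mul_le_mul_of_nonneg_left hlog2lt.le hδ
  linarith
end

section
/- Let X and Y be independent random variables on [n] with H(X) ≥ log₂ n − δ and H(Y) ≥ log₂ n − δ, where δ = 1/48². Then Pr[X = Y] ≥ 1/(8n). -/
open Finset

/-- `x log x ≥ -1/e` for `x > 0`. -/
lemma aux_mul_log_ge (x : ℝ) (hx : 0 < x) : -(Real.exp 1)⁻¹ ≤ x * Real.log x := by
  have h := Real.add_one_le_exp (Real.log x⁻¹ - 1)
  rw [Real.exp_sub, Real.exp_log (by positivity)] at h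
  have hlog : -Real.log x ≤ x⁻¹ / Real.exp 1 := by
    rw [← Real.log_inv]; linarith
  have h1 : x * -Real.log x ≤ x * (x⁻¹ / Real.exp 1) :=
    mul_le_mul_of_nonneg_left hlog hx.le
  have h2 : x * (x⁻¹ / Real.exp 1) = (Real.exp 1)⁻¹ := by
    field_simp
  nlinarith [h1, h2]

lemma aux_psi_nonneg (n : ℕ) (hn : 0 < n) (x : ℝ) (hx : 0 ≤ x) :
    0 ≤ x * Real.log n - Real.negMulLog x - x + 1 / n := by
  have hn' : (0:ℝ) < n := by exact_mod_cast hn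
  rcases eq_or_lt_of_le hx with h | h
  · rw [← h]; simp [Real.negMulLog]
  · have key : 1 - (n * x)⁻¹ ≤ Real.log (n * x) := by
      have h0 : (0:ℝ) < (n*x)⁻¹ := by positivity
      have := Real.log_le_sub_one_of_pos h0
      rw [Real.log_inv] at this
      linarith
    have hmul : x - 1/n ≤ x * Real.log (n * x) := by
      have h1 : x * (1 - (n * x)⁻¹) ≤ x * Real.log (n * x) :=
        mul_le_mul_of_nonneg_left key hx
      have h2 : x * (1 - (n * x)⁻¹) = x - 1/n := by
        field_simp
      linarith
    have hsplit : Real.log (n * x) = Real.log n + Real.log x :=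
      Real.log_mul hn'.ne' h.ne'
    rw [Real.negMulLog]
    nlinarith [hmul, hsplit]

/-- ψ lower bound on small x : if `0 ≤ x ≤ 1/(2n)` then ψ ≥ 1/(8n). -/
lemma aux_psi_big (n : ℕ) (hn : 0 < n) (x : ℝ) (hx : 0 ≤ x) (hx2 : x ≤ 1 / (2 * n)) :
    1 / (8 * n) ≤ x * Real.log n - Real.negMulLog x - x + 1 / n := by
  have hn' : (0:ℝ) < n := by exact_mod_cast hn
  have he : (2.7 : ℝ) < Real.exp 1 := by
    have := Real.exp_one_gt_d9; linarith
  have hinv : (Real.exp 1)⁻¹ ≤ 3/8 := by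
    rw [inv_le_iff_one_le_mul₀ (Real.exp_pos 1)]
    nlinarith
  rcases eq_or_lt_of_le hx with h | h
  · rw [← h]; simp [Real.negMulLog]
    have hpos : (0:ℝ) ≤ (n:ℝ)⁻¹ := by positivity
    nlinarith
  · have hy : (0:ℝ) < n * x := by positivity
    have hyl := aux_mul_log_ge (n * x) hy
    have hsplit : Real.log (n * x) = Real.log n + Real.log x :=
      Real.log_mul hn'.ne' h.ne'
    have h1 : -(3/8) ≤ (n:ℝ) * x * Real.log (n * x) := by
      calc -(3/8 : ℝ) ≤ -(Real.exp 1)⁻¹ := by linarith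
        _ ≤ _ := hyl
    have h2 : x * Real.log n - Real.negMulLog x = x * Real.log (n * x) := by
      rw [Real.negMulLog, hsplit]; ring
    rw [h2]
    have h3 : -(3/(8*(n:ℝ))) ≤ x * Real.log (n * x) := by
      have heq : x * Real.log (n*x) = ((n:ℝ) * x * Real.log (n*x)) / n := by
        field_simp
      rw [heq, le_div_iff₀ hn']
      calc -(3/(8*(n:ℝ))) * n = -(3/8) := by field_simp
        _ ≤ _ := h1
    have e1 : (3:ℝ)/(8*(n:ℝ)) = 3/8 * (1/n) := by ring
    have e2 : (1:ℝ)/(2*(n:ℝ)) = 1/2 * (1/n) := by ring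
    have e3 : (1:ℝ)/(8*(n:ℝ)) = 1/8 * (1/n) := by ring
    rw [e3]; rw [e1] at h3; rw [e2] at hx2
    linarith

/-- Counting lemma: few indices have small mass. -/
lemma aux_count (n : ℕ) (hn : 0 < n) (p : Fin n → ℝ) (hp0 : ∀ i, 0 ≤ p i)
    (hp1 : ∑ i, p i = 1)
    (hHp : Real.log n - Real.log 2 / 48 ^ 2 ≤ ∑ i, Real.negMulLog (p i)) :
    ((univ.filter (fun i => p i ≤ 1 / (2 * n))).card : ℝ) ≤ n / 4 := by
  have hn' : (0:ℝ) < n := by exact_mod_cast hn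
  set ψ : Fin n → ℝ := fun i => p i * Real.log n - Real.negMulLog (p i) - p i + 1/n with hψ
  have hψ0 : ∀ i, 0 ≤ ψ i := fun i => aux_psi_nonneg n hn (p i) (hp0 i)
  have hψsum : ∑ i, ψ i ≤ Real.log 2 / 48 ^ 2 := by
    have : ∑ i, ψ i = Real.log n - ∑ i, Real.negMulLog (p i) := by
      simp only [hψ, Finset.sum_add_distrib, Finset.sum_sub_distrib, ← Finset.sum_mul, hp1]
      simp [Finset.card_univ]
      field_simp
      ring
    rw [this]; linarith
  set S := univ.filter (fun i => p i ≤ 1 / (2 * n)) with hS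
  have hbig : ∀ i ∈ S, 1 / (8 * (n:ℝ)) ≤ ψ i := by
    intro i hi
    rw [hS, Finset.mem_filter] at hi
    exact aux_psi_big n hn (p i) (hp0 i) hi.2
  have hcard : (S.card : ℝ) * (1 / (8 * n)) ≤ ∑ i, ψ i := by
    calc (S.card : ℝ) * (1 / (8 * n)) = ∑ _i ∈ S, 1 / (8 * (n:ℝ)) := by
          rw [Finset.sum_const, nsmul_eq_mul]
      _ ≤ ∑ i ∈ S, ψ i := Finset.sum_le_sum hbig
      _ ≤ ∑ i, ψ i := Finset.sum_le_sum_of_subset_of_nonneg (Finset.subset_univ S)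
          (fun i _ _ => hψ0 i)
  have hlog2 : Real.log 2 ≤ 1 := by
    have h2e : (2:ℝ) ≤ Real.exp 1 := by
      have := Real.exp_one_gt_d9; linarith
    calc Real.log 2 ≤ Real.log (Real.exp 1) := Real.log_le_log (by norm_num) h2e
      _ = 1 := Real.log_exp 1
  -- S.card * (1/(8n)) ≤ 1/2304  ⇒  S.card ≤ 8n/2304 ≤ n/4
  have h1 : (S.card : ℝ) * (1 / (8 * n)) ≤ 1 / 2304 := by
    calc (S.card:ℝ) * (1 / (8 * n)) ≤ ∑ i, ψ i := hcard
      _ ≤ Real.log 2 / 48 ^ 2 := hψsum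
      _ ≤ 1 / 2304 := by rw [div_le_div_iff₀ (by norm_num) (by norm_num)]; nlinarith
  have hc : (1/(8*(n:ℝ)))*(8*n) = 1 := by field_simp
  have h2 := mul_le_mul_of_nonneg_right h1 (show (0:ℝ) ≤ 8*n by positivity)
  nlinarith [h2, hc, hn']

/-- If `X, Y` are independent random variables on `[n]` (mass functions
`p, q`) with entropies at least `log₂ n - 1/48²`, then `Pr[X = Y] ≥ 1/(8n)`. -/
theorem stmt1 (n : ℕ) (hn : 0 < n) (p q : Fin n → ℝ)
    (hp0 : ∀ i, 0 ≤ p i) (hp1 : ∑ i, p i = 1)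
    (hq0 : ∀ i, 0 ≤ q i) (hq1 : ∑ i, q i = 1)
    (hHp : (∑ i, Real.negMulLog (p i)) / Real.log 2 ≥ Real.logb 2 n - 1 / 48 ^ 2)
    (hHq : (∑ i, Real.negMulLog (q i)) / Real.log 2 ≥ Real.logb 2 n - 1 / 48 ^ 2) :
    ∑ i, p i * q i ≥ 1 / (8 * n) := by
  classical
  have hn' : (0:ℝ) < n := by exact_mod_cast hn
  have hlog2pos : (0:ℝ) < Real.log 2 := Real.log_pos one_lt_two
  have convert_hyp : ∀ r : Fin n → ℝ,
      (∑ i, Real.negMulLog (r i)) / Real.log 2 ≥ Real.logb 2 n - 1 / 48 ^ 2 →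
      Real.log n - Real.log 2 / 48 ^ 2 ≤ ∑ i, Real.negMulLog (r i) := by
    intro r h
    rw [ge_iff_le, le_div_iff₀ hlog2pos] at h
    calc Real.log n - Real.log 2 / 48 ^ 2
        = (Real.logb 2 n - 1 / 48 ^ 2) * Real.log 2 := by
          rw [Real.logb]; field_simp
      _ ≤ _ := h
  have hSp := aux_count n hn p hp0 hp1 (convert_hyp p hHp)
  have hSq := aux_count n hn q hq0 hq1 (convert_hyp q hHq)
  set T := univ.filter (fun i => 1/(2*(n:ℝ)) < p i ∧ 1/(2*(n:ℝ)) < q i) with hT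
  have hsub : univ.filter (fun i => ¬(1/(2*(n:ℝ)) < p i ∧ 1/(2*(n:ℝ)) < q i)) ⊆
      univ.filter (fun i => p i ≤ 1 / (2 * (n:ℝ))) ∪
      univ.filter (fun i => q i ≤ 1 / (2 * (n:ℝ))) := by
    intro i hi
    rw [Finset.mem_filter] at hi
    rw [Finset.mem_union, Finset.mem_filter, Finset.mem_filter]
    rcases not_and_or.mp hi.2 with h | h
    · exact Or.inl ⟨Finset.mem_univ i, not_lt.mp h⟩
    · exact Or.inr ⟨Finset.mem_univ i, not_lt.mp h⟩
  have hcardsplit := Finset.card_filter_add_card_filter_not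
    (s := (univ : Finset (Fin n)))
    (p := fun i => 1/(2*(n:ℝ)) < p i ∧ 1/(2*(n:ℝ)) < q i)
  have hneg : ((univ.filter (fun i => ¬(1/(2*(n:ℝ)) < p i ∧ 1/(2*(n:ℝ)) < q i))).card : ℝ)
      ≤ n / 2 := by
    calc ((univ.filter (fun i => ¬(1/(2*(n:ℝ)) < p i ∧ 1/(2*(n:ℝ)) < q i))).card : ℝ)
        ≤ ((univ.filter (fun i => p i ≤ 1 / (2 * (n:ℝ))) ∪
            univ.filter (fun i => q i ≤ 1 / (2 * (n:ℝ)))).card : ℝ) := by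
          exact_mod_cast Finset.card_le_card hsub
      _ ≤ ((univ.filter (fun i => p i ≤ 1 / (2 * (n:ℝ)))).card : ℝ) +
          ((univ.filter (fun i => q i ≤ 1 / (2 * (n:ℝ)))).card : ℝ) := by
          exact_mod_cast Finset.card_union_le _ _
      _ ≤ n / 4 + n / 4 := add_le_add hSp hSq
      _ = n / 2 := by ring
  have hTcard : (n:ℝ) / 2 ≤ (T.card : ℝ) := by
    have h1 : (T.card : ℝ) +
        ((univ.filter (fun i => ¬(1/(2*(n:ℝ)) < p i ∧ 1/(2*(n:ℝ)) < q i))).card : ℝ)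
        = n := by
      rw [hT]
      have h0 := hcardsplit
      rw [Finset.card_univ, Fintype.card_fin] at h0
      exact_mod_cast h0
    linarith
  have hterm : ∀ i ∈ T, 1/(2*(n:ℝ)) * (1/(2*(n:ℝ))) ≤ p i * q i := by
    intro i hi
    rw [hT, Finset.mem_filter] at hi
    exact mul_le_mul hi.2.1.le hi.2.2.le (by positivity) (hp0 i)
  rw [ge_iff_le]
  calc 1/(8*(n:ℝ)) = ((n:ℝ)/2) * (1/(2*(n:ℝ)) * (1/(2*(n:ℝ)))) := by
        field_simp; ring
    _ ≤ (T.card : ℝ) * (1/(2*(n:ℝ)) * (1/(2*(n:ℝ)))) :=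
        mul_le_mul_of_nonneg_right hTcard (by positivity)
    _ = ∑ _i ∈ T, 1/(2*(n:ℝ)) * (1/(2*(n:ℝ))) := by
        rw [Finset.sum_const, nsmul_eq_mul]
    _ ≤ ∑ i ∈ T, p i * q i := Finset.sum_le_sum hterm
    _ ≤ ∑ i, p i * q i := Finset.sum_le_sum_of_subset_of_nonneg (Finset.subset_univ T)
        (fun i _ _ => mul_nonneg (hp0 i) (hq0 i))
end

section
/- Let X and Y be independent random variables on [n] with n ≥ 4, and suppose H(X) ≥ log₂ n − δ and H(Y) ≥ log₂ n − δ where δ = 1/48². Then Pr[X ≠ Y] ≥ 1/4. -/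
open Real Finset

/-- Tangent line bound: `negMulLog x ≤ negMulLog c + (-log c - 1) * (x - c)` for `c > 0, x ≥ 0`. -/
lemma negMulLog_le_tangent {c x : ℝ} (hc : 0 < c) (hx : 0 ≤ x) :
    Real.negMulLog x ≤ Real.negMulLog c + (-Real.log c - 1) * (x - c) := by
  rcases eq_or_lt_of_le hx with h | hx
  · simp only [← h, Real.negMulLog_zero, Real.negMulLog, neg_mul]
    nlinarith [Real.log_le_sub_one_of_pos hc]
  · have h1 : Real.log (c / x) ≤ c / x - 1 := Real.log_le_sub_one_of_pos (by positivity)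
    have h2 : Real.log (c / x) = Real.log c - Real.log x := Real.log_div hc.ne' hx.ne'
    simp only [Real.negMulLog, neg_mul]
    have h3 : x * Real.log (c / x) ≤ x * (c / x - 1) :=
      mul_le_mul_of_nonneg_left h1 hx.le
    rw [h2] at h3
    have h4 : x * (c / x - 1) = c - x := by field_simp
    nlinarith

/-- Grouping bound: the entropy is bounded via the weight on a single point. -/
lemma entropy_group_bound (n : ℕ) (hn : 4 ≤ n) (q : Fin n → ℝ)
    (hq0 : ∀ i, 0 ≤ q i) (hq1 : ∑ i, q i = 1) (j : Fin n) :
    ∑ i, Real.negMulLog (q i) ≤ Real.binEntropy (q j) + (1 - q j) * Real.log n := by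
  classical
  have hnpos : (0:ℝ) < n := by positivity
  have hn1 : (1:ℝ) ≤ (n:ℝ) - 1 := by
    have : (4:ℝ) ≤ n := by exact_mod_cast hn
    linarith
  set s : ℝ := 1 - q j with hs
  have hsum : ∑ i ∈ Finset.univ.erase j, q i = s := by
    have := Finset.add_sum_erase Finset.univ q (Finset.mem_univ j)
    rw [hq1] at this
    linarith
  have hs0 : 0 ≤ s := by
    rw [← hsum]; exact Finset.sum_nonneg fun i _ => hq0 i
  have hsplit : ∑ i, Real.negMulLog (q i)
      = Real.negMulLog (q j) + ∑ i ∈ Finset.univ.erase j, Real.negMulLog (q i) := by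
    rw [← Finset.add_sum_erase Finset.univ (fun i => Real.negMulLog (q i)) (Finset.mem_univ j)]
  have hcard : (Finset.univ.erase j).card = n - 1 := by
    rw [Finset.card_erase_of_mem (Finset.mem_univ j), Finset.card_univ, Fintype.card_fin]
  have hcardR : ((Finset.univ.erase j).card : ℝ) = (n:ℝ) - 1 := by
    rw [hcard]
    have : (1:ℕ) ≤ n := by omega
    push_cast [Nat.cast_sub this]
    ring
  rw [Real.binEntropy_eq_negMulLog_add_negMulLog_one_sub, hsplit, ← hs]
  have key : ∑ i ∈ Finset.univ.erase j, Real.negMulLog (q i)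
      ≤ Real.negMulLog s + s * Real.log n := by
    rcases eq_or_lt_of_le hs0 with h0 | hspos
    · -- s = 0 : all q i = 0 for i ≠ j
      have hall : ∀ i ∈ Finset.univ.erase j, q i = 0 := by
        intro i hi
        have := (Finset.sum_eq_zero_iff_of_nonneg (fun i _ => hq0 i)).mp
          (by rw [hsum, ← h0]) i hi
        exact this
      rw [Finset.sum_congr rfl (fun i hi => by rw [hall i hi, Real.negMulLog_zero]),
        Finset.sum_const, ← h0]
      simp
    · set c : ℝ := s / ((n:ℝ) - 1) with hc
      have hcpos : 0 < c := by
        apply div_pos hspos; linarith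
      have hstep : ∑ i ∈ Finset.univ.erase j, Real.negMulLog (q i)
          ≤ ∑ i ∈ Finset.univ.erase j,
              (Real.negMulLog c + (-Real.log c - 1) * (q i - c)) :=
        Finset.sum_le_sum fun i _ => negMulLog_le_tangent hcpos (hq0 i)
      have hsum2 : ∑ i ∈ Finset.univ.erase j,
          (Real.negMulLog c + (-Real.log c - 1) * (q i - c))
          = ((n:ℝ) - 1) * Real.negMulLog c
            + (-Real.log c - 1) * (s - ((n:ℝ) - 1) * c) := by
        rw [Finset.sum_add_distrib, Finset.sum_const, ← Finset.mul_sum, Finset.sum_sub_distrib,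
          Finset.sum_const, hsum]
        simp only [nsmul_eq_mul, hcardR]
      have hcc : ((n:ℝ) - 1) * c = s := by
        rw [hc]; field_simp
      have hval : ((n:ℝ) - 1) * Real.negMulLog c
          = Real.negMulLog s + s * Real.log ((n:ℝ) - 1) := by
        simp only [Real.negMulLog, neg_mul, hc]
        rw [Real.log_div hspos.ne' (by linarith : ((n:ℝ) - 1) ≠ 0)]
        field_simp
        ring
      have hlog : Real.log ((n:ℝ) - 1) ≤ Real.log n :=
        Real.log_le_log (by linarith) (by linarith)
      calc ∑ i ∈ Finset.univ.erase j, Real.negMulLog (q i)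
          ≤ ((n:ℝ) - 1) * Real.negMulLog c
            + (-Real.log c - 1) * (s - ((n:ℝ) - 1) * c) := hstep.trans (le_of_eq hsum2)
        _ = Real.negMulLog s + s * Real.log ((n:ℝ) - 1) := by rw [hcc, hval]; ring
        _ ≤ Real.negMulLog s + s * Real.log n := by nlinarith
  linarith

/-- If `n ≥ 4` and `X, Y` are independent random variables on `[n]` with
entropies at least `log₂ n - 1/48²`, then `Pr[X ≠ Y] ≥ 1/4`. -/
theorem stmt2 (n : ℕ) (hn : 4 ≤ n) (p q : Fin n → ℝ)
    (hp0 : ∀ i, 0 ≤ p i) (hp1 : ∑ i, p i = 1)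
    (hq0 : ∀ i, 0 ≤ q i) (hq1 : ∑ i, q i = 1)
    (hHp : (∑ i, Real.negMulLog (p i)) / Real.log 2 ≥ Real.logb 2 n - 1 / 48 ^ 2)
    (hHq : (∑ i, Real.negMulLog (q i)) / Real.log 2 ≥ Real.logb 2 n - 1 / 48 ^ 2) :
    1 - ∑ i, p i * q i ≥ 1 / 4 := by
  have hlog2 : (0:ℝ) < Real.log 2 := Real.log_pos (by norm_num)
  -- entropy in nats
  have hH : ∑ i, Real.negMulLog (q i) ≥ Real.log n - (1 / 48 ^ 2) * Real.log 2 := by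
    have h1 : (Real.logb 2 n - 1 / 48 ^ 2) * Real.log 2 ≤ ∑ i, Real.negMulLog (q i) := by
      rw [← le_div_iff₀ hlog2]; exact hHq
    have h2 : Real.logb 2 n * Real.log 2 = Real.log n := by
      rw [Real.logb]; field_simp
    nlinarith
  -- log n ≥ 2 log 2
  have hlogn : 2 * Real.log 2 ≤ Real.log n := by
    have : Real.log 4 ≤ Real.log n := by
      apply Real.log_le_log (by norm_num)
      exact_mod_cast hn
    have h4 : Real.log 4 = 2 * Real.log 2 := by
      rw [show (4:ℝ) = 2 ^ 2 by norm_num, Real.log_pow]; push_cast; ring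
    linarith
  -- every q j ≤ 3/4
  have hqmax : ∀ j, q j ≤ 3 / 4 := by
    intro j
    have hgb := entropy_group_bound n hn q hq0 hq1 j
    have hbin : Real.binEntropy (q j) ≤ Real.log 2 := Real.binEntropy_le_log_two
    -- log n - δ log 2 ≤ log 2 + (1 - q j) log n  ⇒  q j * log n ≤ (1 + δ) log 2
    have h1 : q j * Real.log n ≤ (1 + 1 / 48 ^ 2) * Real.log 2 := by nlinarith
    nlinarith [mul_le_mul_of_nonneg_left hlogn (hq0 j)]
  -- conclude
  have : ∑ i, p i * q i ≤ ∑ i, p i * (3 / 4) :=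
    Finset.sum_le_sum fun i _ => mul_le_mul_of_nonneg_left (hqmax i) (hp0 i)
  rw [← Finset.sum_mul, hp1] at this
  linarith
end

section
/- Let X be a random variable on [n] with H(X) ≥ log₂ n − δ, where δ = 1/48². Then there exists a set S ⊆ [n] with |S| ≥ (3/4)n such that for every x ∈ S, Pr[X = x] ≥ 1/(2n). -/
open Real Finset

lemma pw_nonneg (t : ℝ) (ht : 0 ≤ t) : 0 ≤ t * Real.log t - t + 1 := by
  rcases eq_or_lt_of_le ht with h | h
  · simp [← h]
  · have h1 : Real.log (1/t) ≤ 1/t - 1 := Real.log_le_sub_one_of_pos (by positivity)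
    rw [Real.log_div one_ne_zero (ne_of_gt h), Real.log_one] at h1
    have h2 : t * (0 - Real.log t) ≤ t * (1/t - 1) :=
      mul_le_mul_of_nonneg_left h1 ht
    have h3 : t * (1/t) = 1 := by field_simp
    nlinarith [h2, h3]

lemma pw_small (t : ℝ) (ht0 : 0 ≤ t) (ht : t ≤ 1/2) :
    1/8 ≤ t * Real.log t - t + 1 := by
  rcases eq_or_lt_of_le ht0 with h | h
  · simp [← h]; norm_num
  · -- log (1/t) ≤ (1/t)/e
    have he : (2.7182818283 : ℝ) < Real.exp 1 := Real.exp_one_gt_d9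
    have h1 : Real.log (1/t) ≤ (1/t) / Real.exp 1 := by
      have := Real.add_one_le_exp (Real.log (1/t) - 1)
      have h2 : Real.exp (Real.log (1/t) - 1) = (1/t) / Real.exp 1 := by
        rw [Real.exp_sub, Real.exp_log (by positivity)]
      linarith [this, h2 ▸ this]
    have h3 : t * Real.log (1/t) ≤ t * ((1/t) / Real.exp 1) :=
      mul_le_mul_of_nonneg_left h1 ht0
    have h4 : t * ((1/t) / Real.exp 1) = 1 / Real.exp 1 := by field_simp
    have h5 : Real.log (1/t) = - Real.log t := by
      rw [Real.log_div one_ne_zero (ne_of_gt h), Real.log_one]; ring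
    have h6 : 1 / Real.exp 1 ≤ 3/8 := by
      rw [div_le_iff₀ (Real.exp_pos 1)]; nlinarith
    nlinarith [h3, h4 ▸ h3]

/-- If `X` is a random variable on `[n]` with `H(X) ≥ log₂ n - 1/48²`,
then there is a set `S ⊆ [n]` with `|S| ≥ (3/4)n` such that `Pr[X = x] ≥ 1/(2n)` for
every `x ∈ S`. -/
theorem stmt3 (n : ℕ) (hn : 0 < n) (p : Fin n → ℝ)
    (hp0 : ∀ i, 0 ≤ p i) (hp1 : ∑ i, p i = 1)
    (hH : (∑ i, Real.negMulLog (p i)) / Real.log 2 ≥ Real.logb 2 n - 1 / 48 ^ 2) :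
    ∃ S : Finset (Fin n), (S.card : ℝ) ≥ 3 / 4 * n ∧ ∀ x ∈ S, p x ≥ 1 / (2 * n) := by
  have hnR : (0:ℝ) < n := by exact_mod_cast hn
  have hlog2 : (0:ℝ) < Real.log 2 := Real.log_pos one_lt_two
  -- Step 1: ∑ negMulLog ≥ log n - δ log 2
  have key : Real.log n - (1/48^2) * Real.log 2 ≤ ∑ i, Real.negMulLog (p i) := by
    have h := hH
    rw [ge_iff_le, Real.logb] at h
    have h2 := mul_le_mul_of_nonneg_right h hlog2.le
    rw [sub_mul, div_mul_cancel₀ _ (ne_of_gt hlog2), div_mul_cancel₀ _ (ne_of_gt hlog2)] at h2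
    linarith
  -- the deficit function
  set g : Fin n → ℝ := fun i => p i * Real.log (n * p i) - p i + 1/n with hg
  have hgval : ∀ i, g i = (n * p i * Real.log (n * p i) - n * p i + 1) / n := by
    intro i; rw [hg]; field_simp
  have hgnn : ∀ i, 0 ≤ g i := by
    intro i
    rw [hgval i]
    apply div_nonneg _ hnR.le
    exact pw_nonneg _ (mul_nonneg hnR.le (hp0 i))
  -- Step 2: ∑ g = log n - ∑ negMulLog
  have hsum : ∑ i, g i = Real.log n - ∑ i, Real.negMulLog (p i) := by
    have : ∀ i, g i = (p i * Real.log n - Real.negMulLog (p i)) - p i + 1/n := by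
      intro i
      rcases eq_or_lt_of_le (hp0 i) with h | h
      · simp [hg, Real.negMulLog, ← h]
      · show p i * Real.log ((n:ℝ) * p i) - p i + 1/(n:ℝ) = _
        rw [Real.negMulLog, Real.log_mul (ne_of_gt hnR) (ne_of_gt h)]; ring
    rw [Finset.sum_congr rfl (fun i _ => this i)]
    rw [Finset.sum_add_distrib, Finset.sum_sub_distrib, Finset.sum_sub_distrib,
      ← Finset.sum_mul, hp1, Finset.sum_const, Finset.card_univ, Fintype.card_fin,
      nsmul_eq_mul, mul_one_div, div_self (ne_of_gt hnR)]
    ring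
  -- bad set
  set B : Finset (Fin n) := Finset.univ.filter (fun i => p i < 1/(2*n)) with hB
  have hBg : ∀ i ∈ B, 1/(8*n) ≤ g i := by
    intro i hi
    rw [hB, Finset.mem_filter] at hi
    have ht : n * p i ≤ 1/2 := by
      have := hi.2
      rw [lt_div_iff₀ (by positivity : (0:ℝ) < 2*(n:ℝ))] at this
      nlinarith
    rw [hgval i]
    rw [div_le_div_iff₀ (by positivity) hnR]
    have := pw_small (n * p i) (mul_nonneg hnR.le (hp0 i)) ht
    nlinarith
  have hBsum : (B.card : ℝ) * (1/(8*n)) ≤ ∑ i ∈ B, g i := by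
    have := Finset.card_nsmul_le_sum B g (1/(8*n)) hBg
    simpa [nsmul_eq_mul, mul_comm] using this
  have hBtot : ∑ i ∈ B, g i ≤ ∑ i, g i :=
    Finset.sum_le_sum_of_subset_of_nonneg (Finset.subset_univ B)
      (fun i _ _ => hgnn i)
  have hlog2le1 : Real.log 2 ≤ 1 := by
    have := Real.log_le_sub_one_of_pos (show (0:ℝ) < 2 by norm_num); linarith
  have hBcard : (B.card : ℝ) ≤ n / 4 := by
    have h1 : (B.card : ℝ) * (1/(8*n)) ≤ (1/48^2) * Real.log 2 := by
      calc (B.card : ℝ) * (1/(8*n)) ≤ ∑ i ∈ B, g i := hBsum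
        _ ≤ ∑ i, g i := hBtot
        _ = Real.log n - ∑ i, Real.negMulLog (p i) := hsum
        _ ≤ (1/48^2) * Real.log 2 := by linarith
    have h2 : (1/48^2 : ℝ) * Real.log 2 ≤ 1/2304 := by norm_num; linarith
    have h3 : (B.card : ℝ) * (1/(8*n)) ≤ 1/2304 := le_trans h1 h2
    rw [mul_one_div, div_le_div_iff₀ (by positivity) (by norm_num)] at h3
    linarith
  refine ⟨Finset.univ.filter (fun i => 1/(2*(n:ℝ)) ≤ p i), ?_, ?_⟩
  · have hsplit : B.card + (Finset.univ.filter (fun i => 1/(2*(n:ℝ)) ≤ p i)).card = n := by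
      have := Finset.card_filter_add_card_filter_not
        (s := (Finset.univ : Finset (Fin n))) (p := fun i => p i < 1/(2*(n:ℝ)))
      simpa [hB, not_lt, Finset.card_univ] using this
    have : ((Finset.univ.filter (fun i => 1/(2*(n:ℝ)) ≤ p i)).card : ℝ) = n - B.card := by
      have := congrArg (Nat.cast (R := ℝ)) hsplit
      push_cast at this
      linarith
    rw [this]; linarith
  · intro x hx
    rw [Finset.mem_filter] at hx
    exact hx.2
end

section
/- Let P and Q be probability distributions on ℕ with KL-divergence D(P‖Q) = a < ∞, and let ε ∈ (0,1). Define Good = {i ∈ ℕ : P(i)·2^{−(a+1)/ε} ≤ Q(i)}. If X is distributed according to P, then Pr[X ∈ Good] ≥ 1 − ε. -/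
set_option maxHeartbeats 1000000 in
/-- Substate Theorem: Let `P, Q` be probability distributions on `ℕ` with
finite KL-divergence `a = D(P‖Q)` (in bits) and `ε ∈ (0,1)`. If
`Good = {i : P(i)·2^{-(a+1)/ε} ≤ Q(i)}` and `X ~ P`, then `Pr[X ∈ Good] ≥ 1 - ε`. -/
theorem stmt8 (P Q : ℕ → ℝ)
    (hP0 : ∀ i, 0 ≤ P i) (hP1 : ∑' i, P i = 1)
    (hQ0 : ∀ i, 0 ≤ Q i) (hQ1 : ∑' i, Q i = 1)
    (habs : ∀ i, Q i = 0 → P i = 0)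
    (hsum : Summable fun i => if P i = 0 then 0 else P i * Real.logb 2 (P i / Q i))
    (a : ℝ) (ha : a = ∑' i, if P i = 0 then 0 else P i * Real.logb 2 (P i / Q i))
    (ε : ℝ) (hε : ε ∈ Set.Ioo (0 : ℝ) 1) :
    (1 : ℝ) - ε ≤ ∑' i : {i : ℕ // P i * (2 : ℝ) ^ (-(a + 1) / ε) ≤ Q i}, P i.1 := by
  obtain ⟨hε0, hε1⟩ := hε
  have hlog2 : (0:ℝ) < Real.log 2 := Real.log_pos one_lt_two
  set g : ℕ → ℝ := fun i => if P i = 0 then 0 else P i * Real.log (P i / Q i) with hg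
  have hPs : Summable P := by
    by_contra h
    rw [tsum_eq_zero_of_not_summable h] at hP1; norm_num at hP1
  have hQs : Summable Q := by
    by_contra h
    rw [tsum_eq_zero_of_not_summable h] at hQ1; norm_num at hQ1
  have hfg : ∀ i, (if P i = 0 then 0 else P i * Real.logb 2 (P i / Q i)) = g i / Real.log 2 := by
    intro i
    by_cases h : P i = 0 <;> simp [hg, h, Real.logb, mul_div_assoc]
  have hgs : Summable g := by
    have h2 := hsum.mul_right (Real.log 2)
    apply h2.congr
    intro i
    rw [hfg i]
    field_simp
  have hsumg : ∑' i, g i = a * Real.log 2 := by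
    have h1 : ∑' i, g i / Real.log 2 = (∑' i, g i) / Real.log 2 := tsum_div_const
    have h2 : a = (∑' i, g i) / Real.log 2 := by
      rw [ha, ← h1]
      exact tsum_congr hfg
    rw [h2]; field_simp
  -- Key pointwise inequality: for t > 0, P i * log t + (P i - t * Q i) ≤ g i
  have key : ∀ t : ℝ, 0 < t → ∀ i, P i * Real.log t + (P i - t * Q i) ≤ g i := by
    intro t ht i
    by_cases hp : P i = 0
    · simp only [hg, hp, if_pos]
      have := hQ0 i
      nlinarith
    · have hp' : 0 < P i := lt_of_le_of_ne (hP0 i) (Ne.symm hp)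
      have hq' : 0 < Q i := by
        rcases eq_or_lt_of_le (hQ0 i) with h|h
        · exact absurd (habs i h.symm) hp
        · exact h
      simp only [hg, hp, if_neg, ite_false]
      have h1 : Real.log (t * Q i / P i) ≤ t * Q i / P i - 1 :=
        Real.log_le_sub_one_of_pos (by positivity)
      have h2 : Real.log (t * Q i / P i) = Real.log t + Real.log (Q i) - Real.log (P i) := by
        rw [Real.log_div (by positivity) hp, Real.log_mul (ne_of_gt ht) (ne_of_gt hq')]
      have h3 : Real.log (P i / Q i) = Real.log (P i) - Real.log (Q i) :=
        Real.log_div hp (ne_of_gt hq')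
      rw [h3]
      rw [h2] at h1
      have h4 := mul_le_mul_of_nonneg_left h1 (le_of_lt hp')
      have h5 : P i * (t * Q i / P i - 1) = t * Q i - P i := by field_simp
      nlinarith [h4, h5]
  -- a ≥ 0
  have ha0 : 0 ≤ a := by
    have hk := key 1 one_pos
    simp only [Real.log_one, mul_zero, zero_add, one_mul] at hk
    have hs1 : Summable (fun i => P i - Q i) := hPs.sub hQs
    have := Summable.tsum_le_tsum hk hs1 hgs
    rw [Summable.tsum_sub hPs hQs, hP1, hQ1, hsumg] at this
    nlinarith
  have hgoalEq : (∑' i : {i : ℕ // P i * (2 : ℝ) ^ (-(a + 1) / ε) ≤ Q i}, P i.1)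
      = ∑' i : ↥{i : ℕ | P i * (2 : ℝ) ^ (-(a + 1) / ε) ≤ Q i}, P i.1 := rfl
  rw [hgoalEq]
  set S : Set ℕ := {i | P i * (2 : ℝ) ^ (-(a + 1) / ε) ≤ Q i} with hS
  set pS := ∑' i : S, P i with hpS
  set pB := ∑' i : ↑Sᶜ, P i with hpB
  set qS := ∑' i : S, Q i with hqS
  set gS := ∑' i : S, g i with hgS
  set gB := ∑' i : ↑Sᶜ, g i with hgB
  have hPsub : Summable (fun i : ↑S => P i.1) := hPs.subtype S
  have hPsubc : Summable (fun i : ↑Sᶜ => P i.1) := hPs.subtype Sᶜ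
  have hQsub : Summable (fun i : ↑S => Q i.1) := hQs.subtype S
  have hgsub : Summable (fun i : ↑S => g i.1) := hgs.subtype S
  have hgsubc : Summable (fun i : ↑Sᶜ => g i.1) := hgs.subtype Sᶜ
  have hsplitP : pS + pB = 1 := by
    rw [hpS, hpB, ← hP1]; exact Summable.tsum_subtype_add_tsum_subtype_compl hPs S
  have hsplitg : gS + gB = a * Real.log 2 := by
    rw [hgS, hgB, ← hsumg]; exact Summable.tsum_subtype_add_tsum_subtype_compl hgs S
  have hpS0 : 0 ≤ pS := tsum_nonneg (fun i => hP0 i.1)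
  have hpB0 : 0 ≤ pB := tsum_nonneg (fun i => hP0 i.1)
  have hqS1 : qS ≤ 1 := by
    have hsplitQ : qS + (∑' i : ↑Sᶜ, Q i) = 1 := by
      rw [hqS, ← hQ1]; exact Summable.tsum_subtype_add_tsum_subtype_compl hQs S
    have : (0:ℝ) ≤ ∑' i : ↑Sᶜ, Q i := tsum_nonneg (fun i => hQ0 i.1)
    linarith
  -- lower bound on gS using key with t = 1/2
  have hgSlb : -Real.log 2 ≤ gS := by
    have hk := key (1/2) (by norm_num)
    have hhalf : Real.log (1/2 : ℝ) = -Real.log 2 := by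
      rw [one_div, Real.log_inv]
    have hsl : Summable (fun i : S => P i.1 * Real.log (1/2) + (P i.1 - (1/2) * Q i.1)) := by
      exact (hPsub.mul_right _).add (hPsub.sub (hQsub.mul_left _))
    have h1 : ∑' i : S, (P i.1 * Real.log (1/2) + (P i.1 - (1/2) * Q i.1)) ≤ gS := by
      exact Summable.tsum_le_tsum (fun i => key (1/2) (by norm_num) i.1) hsl hgsub
    have h2 : ∑' i : S, (P i.1 * Real.log (1/2) + (P i.1 - (1/2) * Q i.1))
        = Real.log (1/2) * pS + (pS - (1/2) * qS) := by
      rw [Summable.tsum_add (hPsub.mul_right _) (hPsub.sub (hQsub.mul_left _)),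
        Summable.tsum_sub hPsub (hQsub.mul_left _), tsum_mul_left]
      have : ∑' i : S, P i.1 * Real.log (1/2) = Real.log (1/2) * pS := by
        rw [← tsum_mul_left]; exact tsum_congr (fun i => mul_comm _ _)
      rw [this]
    rw [h2, hhalf] at h1
    have hl1 : Real.log 2 < 1 := by nlinarith [Real.log_two_lt_d9]
    have hl2 : (1/2:ℝ) < Real.log 2 := by nlinarith [Real.log_two_gt_d9]
    nlinarith
  have hgBub : gB ≤ (a + 1) * Real.log 2 := by nlinarith
  -- lower bound on gB termwise
  have hc : 0 < (a + 1) / ε := by positivity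
  have hkB : ∀ i : ↑Sᶜ, ((a + 1) / ε * Real.log 2) * P i.1 ≤ g i.1 := by
    rintro ⟨i, hi⟩
    simp only [Set.mem_compl_iff, hS, Set.mem_setOf_eq, not_le] at hi
    have hp' : 0 < P i := by
      rcases eq_or_lt_of_le (hP0 i) with h|h
      · exfalso
        rw [← h, zero_mul] at hi
        exact absurd hi (not_lt.mpr (hQ0 i))
      · exact h
    have hq' : 0 < Q i := by
      rcases eq_or_lt_of_le (hQ0 i) with h|h
      · exact absurd (habs i h.symm) hp'.ne'
      · exact h
    have hpow : (0:ℝ) < (2:ℝ) ^ ((a+1)/ε) := Real.rpow_pos_of_pos two_pos _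
    have hmul : (2:ℝ) ^ ((a+1)/ε) * Q i < P i := by
      have h1 : (2:ℝ) ^ ((a+1)/ε) * Q i < (2:ℝ) ^ ((a+1)/ε) * (P i * (2:ℝ) ^ (-(a+1)/ε)) :=
        (mul_lt_mul_iff_right₀ hpow).mpr hi
      have h2 : (2:ℝ) ^ ((a+1)/ε) * (P i * (2:ℝ) ^ (-(a+1)/ε)) = P i := by
        rw [neg_div, Real.rpow_neg (le_of_lt two_pos)]
        field_simp
      rw [h2] at h1; exact h1
    have hratio : (2:ℝ) ^ ((a+1)/ε) ≤ P i / Q i := by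
      rw [le_div_iff₀ hq']; exact le_of_lt hmul
    have hlog : (a+1)/ε * Real.log 2 ≤ Real.log (P i / Q i) := by
      have := Real.log_le_log hpow hratio
      rwa [Real.log_rpow two_pos] at this
    have : g i = P i * Real.log (P i / Q i) := by
      simp only [hg, if_neg hp'.ne']
    rw [this]
    calc ((a + 1) / ε * Real.log 2) * P i = P i * ((a+1)/ε * Real.log 2) := mul_comm _ _
      _ ≤ P i * Real.log (P i / Q i) := by
          exact mul_le_mul_of_nonneg_left hlog (le_of_lt hp')
  have hgBlb : ((a + 1) / ε * Real.log 2) * pB ≤ gB := by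
    have hsl : Summable (fun i : ↑Sᶜ => ((a + 1) / ε * Real.log 2) * P i.1) :=
      hPsubc.mul_left _
    have := Summable.tsum_le_tsum hkB hsl hgsubc
    rwa [tsum_mul_left] at this
  -- conclude
  have hpBε : pB ≤ ε := by
    have h1 : ((a + 1) / ε * Real.log 2) * pB ≤ (a + 1) * Real.log 2 := le_trans hgBlb hgBub
    have h2 : (a + 1) / ε * pB ≤ a + 1 := by
      have h1' : ((a + 1) / ε * pB) * Real.log 2 ≤ (a + 1) * Real.log 2 := by nlinarith [h1]
      exact le_of_mul_le_mul_right h1' hlog2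
    have h3 : (a + 1) * pB ≤ (a + 1) * ε := by
      have : (a + 1) / ε * pB * ε ≤ (a + 1) * ε :=
        mul_le_mul_of_nonneg_right h2 (le_of_lt hε0)
      calc (a + 1) * pB = (a + 1) / ε * pB * ε := by field_simp
        _ ≤ (a + 1) * ε := this
    have ha1 : 0 < a + 1 := by linarith
    nlinarith
  linarith [hsplitP]
end
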